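/- For every M ∈ ⋀X, the outer space of M is the orthogonal complement of the annihilator of M under contraction: osp M = ({v ∈ X : v⌟M = 0})^⊥. -/

import Mathlib

open scoped RealInnerProductSpace

/-- The blade `v₁ ∧ ⋯ ∧ v_k` in the exterior algebra. -/
noncomputable def expBlade {X : Type*} [AddCommGroup X] [Module ℝ X] {k : ℕ}
    (v : Fin k → X) : ExteriorAlgebra ℝ X :=
  (List.ofFn fun i => ExteriorAlgebra.ι ℝ (v i)).prod

/-- The inner space of a multivector `M`: the subspace `{v ∈ X : v ∧ M = 0}`. -/
noncomputable def innerSpace {X : Type*} [AddCommGroup X] [Module ℝ X]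
    (M : ExteriorAlgebra ℝ X) : Submodule ℝ X :=
  LinearMap.ker ((LinearMap.mulRight ℝ M).comp (ExteriorAlgebra.ι ℝ))

/-- The outer space of a multivector `M`: the intersection of all subspaces `V ⊆ X` such
that `M` lies in the subalgebra of the exterior algebra generated by `V`. -/
noncomputable def outerSpace {X : Type*} [AddCommGroup X] [Module ℝ X]
    (M : ExteriorAlgebra ℝ X) : Submodule ℝ X :=
  sInf {V : Submodule ℝ X |
    M ∈ Algebra.adjoin ℝ (⇑(ExteriorAlgebra.ι ℝ (M := X)) '' (V : Set X))}


open scoped RealInnerProductSpace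

namespace Stmt13Aux

variable {X : Type*} [NormedAddCommGroup X] [InnerProductSpace ℝ X] [FiniteDimensional ℝ X]

theorem mul_iota (ginv : ExteriorAlgebra ℝ X →ₐ[ℝ] ExteriorAlgebra ℝ X)
    (hginv : ∀ v : X, ginv (ExteriorAlgebra.ι ℝ v) = - ExteriorAlgebra.ι ℝ v)
    (v : X) (z : ExteriorAlgebra ℝ X) :
    z * ExteriorAlgebra.ι ℝ v = ExteriorAlgebra.ι ℝ v * ginv z := by
  induction z using ExteriorAlgebra.induction with
  | algebraMap r => rw [AlgHom.commutes, Algebra.commutes]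
  | ι w =>
      rw [hginv, mul_neg]
      exact eq_neg_of_add_eq_zero_left (ExteriorAlgebra.ι_add_mul_swap w v)
  | mul a b ha hb => rw [mul_assoc, hb, ← mul_assoc, ha, map_mul, mul_assoc]
  | add a b ha hb => rw [add_mul, ha, hb, map_add, mul_add]

theorem lc_adjoin (ginv : ExteriorAlgebra ℝ X →ₐ[ℝ] ExteriorAlgebra ℝ X)
    (lc : X → ExteriorAlgebra ℝ X →ₗ[ℝ] ExteriorAlgebra ℝ X)
    (hlc_one : ∀ v : X, lc v 1 = 0)
    (hlc_vec : ∀ v w : X,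
      lc v (ExteriorAlgebra.ι ℝ w) = algebraMap ℝ (ExteriorAlgebra ℝ X) ⟪v, w⟫)
    (hlc_mul : ∀ (v : X) (M N : ExteriorAlgebra ℝ X),
      lc v (M * N) = lc v M * N + ginv M * lc v N)
    (v : X) (W : Submodule ℝ X) (hv : ∀ w ∈ W, ⟪v, w⟫ = 0)
    {z : ExteriorAlgebra ℝ X}
    (hz : z ∈ Algebra.adjoin ℝ ((ExteriorAlgebra.ι ℝ (M := X)) '' (W : Set X))) :
    lc v z = 0 := by
  induction hz using Algebra.adjoin_induction with
  | mem x hx =>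
      obtain ⟨w, hw, rfl⟩ := hx
      rw [hlc_vec, hv w hw, map_zero]
  | algebraMap r =>
      rw [Algebra.algebraMap_eq_smul_one, map_smul, hlc_one, smul_zero]
  | add x y hx hy hx' hy' => rw [map_add, hx', hy', add_zero]
  | mul x y hx hy hx' hy' => rw [hlc_mul, hx', hy', zero_mul, mul_zero, add_zero]

set_option maxHeartbeats 1000000 in
theorem key (ginv : ExteriorAlgebra ℝ X →ₐ[ℝ] ExteriorAlgebra ℝ X)
    (hginv : ∀ v : X, ginv (ExteriorAlgebra.ι ℝ v) = - ExteriorAlgebra.ι ℝ v)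
    (lc : X → ExteriorAlgebra ℝ X →ₗ[ℝ] ExteriorAlgebra ℝ X)
    (hlc_one : ∀ v : X, lc v 1 = 0)
    (hlc_vec : ∀ v w : X,
      lc v (ExteriorAlgebra.ι ℝ w) = algebraMap ℝ (ExteriorAlgebra ℝ X) ⟪v, w⟫)
    (hlc_mul : ∀ (v : X) (M N : ExteriorAlgebra ℝ X),
      lc v (M * N) = lc v M * N + ginv M * lc v N)
    (v : X) (hv : v ≠ 0) (M : ExteriorAlgebra ℝ X) (hM : lc v M = 0) :
    M ∈ Algebra.adjoin ℝ
      ((ExteriorAlgebra.ι ℝ (M := X)) '' (((ℝ ∙ v)ᗮ : Submodule ℝ X) : Set X)) := by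
  set W : Submodule ℝ X := (ℝ ∙ v)ᗮ with hW
  let P : X →ₗ[ℝ] X := W.subtype ∘ₗ (W.orthogonalProjectionOnto).toLinearMap
  have hP0 : ∀ m : X, ExteriorAlgebra.ι ℝ (P m) * ExteriorAlgebra.ι ℝ (P m) = 0 :=
    fun m => ExteriorAlgebra.ι_sq_zero _
  set φ := ExteriorAlgebra.lift ℝ ⟨(ExteriorAlgebra.ι ℝ).comp P, hP0⟩ with hφ
  have hφι : ∀ w : X, φ (ExteriorAlgebra.ι ℝ w) = ExteriorAlgebra.ι ℝ (P w) := fun w => by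
    rw [hφ]; exact ExteriorAlgebra.lift_ι_apply ℝ _ hP0 w
  have hφmem : ∀ N, φ N ∈ Algebra.adjoin ℝ
      ((ExteriorAlgebra.ι ℝ (M := X)) '' (W : Set X)) := by
    intro N
    induction N using ExteriorAlgebra.induction with
    | algebraMap r => rw [AlgHom.commutes]; exact Subalgebra.algebraMap_mem _ r
    | ι w =>
        rw [hφι]
        exact Algebra.subset_adjoin ⟨P w, (W.orthogonalProjectionOnto w).2, rfl⟩
    | mul a b ha hb => rw [map_mul]; exact mul_mem ha hb
    | add a b ha hb => rw [map_add]; exact add_mem ha hb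
  have hdec : ∀ N : ExteriorAlgebra ℝ X, ∃ c, N = φ N + ExteriorAlgebra.ι ℝ v * c := by
    intro N
    induction N using ExteriorAlgebra.induction with
    | algebraMap r => exact ⟨0, by rw [AlgHom.commutes, mul_zero, add_zero]⟩
    | ι w =>
        have hmem : w - P w ∈ Wᗮ := Submodule.sub_starProjection_mem_orthogonal w
        rw [hW, Submodule.orthogonal_orthogonal] at hmem
        obtain ⟨a, ha⟩ := Submodule.mem_span_singleton.mp hmem
        refine ⟨algebraMap ℝ _ a, ?_⟩
        rw [hφι]
        have h : ExteriorAlgebra.ι ℝ w - ExteriorAlgebra.ι ℝ (P w)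
            = ExteriorAlgebra.ι ℝ v * algebraMap ℝ _ a := by
          rw [← map_sub, ← ha, map_smul, ← Algebra.commutes, Algebra.smul_def]
        rw [← h]
        abel
    | mul a b ha hb =>
        obtain ⟨c₁, hc₁⟩ := ha
        obtain ⟨c₂, hc₂⟩ := hb
        have hcomm : φ a * ExteriorAlgebra.ι ℝ v
            = ExteriorAlgebra.ι ℝ v * ginv (φ a) := mul_iota ginv hginv v (φ a)
        refine ⟨ginv (φ a) * c₂ + c₁ * b, ?_⟩
        rw [map_mul]
        calc a * b = (φ a + ExteriorAlgebra.ι ℝ v * c₁)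
              * (φ b + ExteriorAlgebra.ι ℝ v * c₂) := by rw [← hc₁, ← hc₂]
          _ = φ a * φ b + (φ a * ExteriorAlgebra.ι ℝ v) * c₂
              + ExteriorAlgebra.ι ℝ v * (c₁ * (φ b + ExteriorAlgebra.ι ℝ v * c₂)) := by
                noncomm_ring
          _ = φ a * φ b + (ExteriorAlgebra.ι ℝ v * ginv (φ a)) * c₂
              + ExteriorAlgebra.ι ℝ v * (c₁ * b) := by rw [hcomm, ← hc₂]
          _ = φ a * φ b
              + ExteriorAlgebra.ι ℝ v * (ginv (φ a) * c₂ + c₁ * b) := by noncomm_ring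
    | add a b ha hb =>
        obtain ⟨c₁, hc₁⟩ := ha
        obtain ⟨c₂, hc₂⟩ := hb
        refine ⟨c₁ + c₂, ?_⟩
        rw [map_add]
        conv_lhs => rw [hc₁, hc₂]
        noncomm_ring
  obtain ⟨c, hc⟩ := hdec M
  have hvW : ∀ w ∈ W, ⟪v, w⟫ = 0 := fun w hw =>
    (Submodule.mem_orthogonal _ _).mp hw v (Submodule.mem_span_singleton_self v)
  have hφ0 : lc v (φ M) = 0 :=
    lc_adjoin ginv lc hlc_one hlc_vec hlc_mul v W hvW (hφmem M)
  have h : lc v (ExteriorAlgebra.ι ℝ v * c) = 0 := by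
    have h' := hM
    rw [hc, map_add, hφ0, zero_add] at h'
    exact h'
  have h2 : algebraMap ℝ _ ⟪v, v⟫ * c = ExteriorAlgebra.ι ℝ v * lc v c := by
    rw [hlc_mul, hlc_vec, hginv, neg_mul, ← sub_eq_add_neg, sub_eq_zero] at h
    exact h
  have h3 : (⟪v, v⟫ : ℝ) • (ExteriorAlgebra.ι ℝ v * c) = 0 := by
    have h' : ExteriorAlgebra.ι ℝ v * (algebraMap ℝ (ExteriorAlgebra ℝ X) ⟪v, v⟫ * c) = 0 := by
      rw [h2, ← mul_assoc, ExteriorAlgebra.ι_sq_zero, zero_mul]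
    rwa [← mul_assoc, ← Algebra.commutes, mul_assoc, ← Algebra.smul_def] at h'
  have h4 : ExteriorAlgebra.ι ℝ v * c = 0 := by
    rcases smul_eq_zero.mp h3 with h' | h'
    · exact absurd h' (inner_self_ne_zero.mpr hv)
    · exact h'
  rw [hc, h4, add_zero]
  exact hφmem M

end Stmt13Aux


/-- the outer space of `M` is the orthogonal complement of the annihilator
of `M` under left contraction by vectors. -/
theorem stmt13 {X : Type*} [NormedAddCommGroup X] [InnerProductSpace ℝ X]
    [FiniteDimensional ℝ X]
    -- the grade involution: the unique algebra automorphism with `v̂ = -v` on vectors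
    (ginv : ExteriorAlgebra ℝ X →ₐ[ℝ] ExteriorAlgebra ℝ X)
    (hginv : ∀ v : X, ginv (ExteriorAlgebra.ι ℝ v) = - ExteriorAlgebra.ι ℝ v)
    -- the left contraction by a vector, characterized by its defining properties
    (lc : X → ExteriorAlgebra ℝ X →ₗ[ℝ] ExteriorAlgebra ℝ X)
    (hlc_one : ∀ v : X, lc v 1 = 0)
    (hlc_vec : ∀ v w : X, lc v (ExteriorAlgebra.ι ℝ w) = algebraMap ℝ (ExteriorAlgebra ℝ X) ⟪v, w⟫)
    (hlc_mul : ∀ (v : X) (M N : ExteriorAlgebra ℝ X),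
      lc v (M * N) = lc v M * N + ginv M * lc v N)
    (M : ExteriorAlgebra ℝ X) :
    outerSpace M = (Submodule.span ℝ {v : X | lc v M = 0})ᗮ := by
  apply le_antisymm
  · intro w hw
    rw [Submodule.mem_orthogonal]
    intro u hu
    induction hu using Submodule.span_induction with
    | mem v hvS =>
        by_cases hv0 : v = 0
        · simp [hv0]
        · have hmem := Stmt13Aux.key ginv hginv lc hlc_one hlc_vec hlc_mul v hv0 M hvS
          have hle : outerSpace M ≤ (ℝ ∙ v)ᗮ := sInf_le hmem
          exact (Submodule.mem_orthogonal _ _).mp (hle hw) v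
            (Submodule.mem_span_singleton_self v)
    | zero => simp
    | add x y hx hy hx' hy' => rw [inner_add_left, hx', hy', add_zero]
    | smul a x hx hx' => rw [real_inner_smul_left, hx', mul_zero]
  · apply le_sInf
    intro V hV
    have h1 : Vᗮ ≤ Submodule.span ℝ {v : X | lc v M = 0} := by
      intro v hv
      refine Submodule.subset_span ?_
      exact Stmt13Aux.lc_adjoin ginv lc hlc_one hlc_vec hlc_mul v V
        (fun w hw => (Submodule.mem_orthogonal' _ _).mp hv w hw) hV
    calc (Submodule.span ℝ {v : X | lc v M = 0})ᗮ ≤ Vᗮᗮ := Submodule.orthogonal_le h1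
      _ = V := Submodule.orthogonal_orthogonal V
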